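/- Hanner's inequality (case p ≥ 2): for all f, g ∈ L_p, ‖f+g‖_p^p + ‖f-g‖_p^p ≤ (‖f‖_p + ‖g‖_p)^p + |‖f‖_p - ‖g‖_p|^p. -/

import Mathlib

open MeasureTheory

/-- The real-valued `L_p` norm (via `eLpNorm`). -/
noncomputable def LpNorm {Z : Type*} [MeasurableSpace Z] (μ : Measure Z)
    (f : Z → ℝ) (p : ℝ) : ℝ :=
  (eLpNorm f (ENNReal.ofReal p) μ).toReal

open Real Set



private lemma rpow_superadd {a b s : ℝ} (ha : 0 ≤ a) (hb : 0 ≤ b) (hs : 1 ≤ s) :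
    a ^ s + b ^ s ≤ (a + b) ^ s := by
  have h := NNReal.add_rpow_le_rpow_add a.toNNReal b.toNNReal hs
  rw [← NNReal.coe_le_coe] at h
  push_cast [NNReal.coe_rpow] at h
  rwa [Real.coe_toNNReal _ ha, Real.coe_toNNReal _ hb] at h

private lemma rpow_succ' {x : ℝ} (hx : 0 ≤ x) {q : ℝ} (hq : 0 < q + 1) :
    x ^ (q + 1) = x ^ q * x := by
  rcases eq_or_lt_of_le hx with h | h
  · rw [← h, Real.zero_rpow hq.ne', mul_zero]
  · rw [Real.rpow_add_one h.ne']

noncomputable def hannerA (p r : ℝ) : ℝ := (1+r)^(p-1) + (1-r)^(p-1)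
noncomputable def hannerB (p r : ℝ) : ℝ := ((1+r)^(p-1) - (1-r)^(p-1)) * r^(1-p)
noncomputable def hannerG (p r t : ℝ) : ℝ :=
  hannerA p r + hannerB p r * t^p - (1+t)^p - (1-t)^p

private lemma hB_ge_hA {p r : ℝ} (hp : 2 ≤ p) (hr0 : 0 < r) (hr1 : r ≤ 1) :
    hannerA p r ≤ hannerB p r := by
  have hs1 : (1:ℝ) ≤ p - 1 := by linarith
  have key : ((1+r)^(p-1) + (1-r)^(p-1)) * r^(p-1) ≤ (1+r)^(p-1) - (1-r)^(p-1) := by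
    have e1 : (1+r)^(p-1) * r^(p-1) = (r + r*r)^(p-1) := by
      rw [← Real.mul_rpow (by linarith) hr0.le]; congr 1; ring
    have e2 : (1-r)^(p-1) * r^(p-1) = (r - r*r)^(p-1) := by
      rw [← Real.mul_rpow (by linarith) hr0.le]; congr 1; ring
    have h1 : (r + r*r)^(p-1) + (r - r*r)^(p-1) ≤ (2*r)^(p-1) := by
      have := rpow_superadd (a := r + r*r) (b := r - r*r) (by nlinarith) (by nlinarith) hs1
      convert this using 2; ring
    have h2 : (1-r)^(p-1) + (2*r)^(p-1) ≤ (1+r)^(p-1) := by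
      have := rpow_superadd (a := 1-r) (b := 2*r) (by linarith) (by linarith) hs1
      convert this using 2; ring
    rw [add_mul, e1, e2]; linarith
  have hrs : (0:ℝ) < r^(p-1) := Real.rpow_pos_of_pos hr0 _
  have hrinv : r^(1-p) = (r^(p-1))⁻¹ := by
    rw [show (1-p) = -(p-1) by ring, Real.rpow_neg hr0.le]
  rw [hannerA, hannerB, hrinv, ← div_eq_mul_inv, le_div_iff₀ hrs]
  exact key


private lemma hB_hasDerivAt {p t : ℝ} (hp : 2 ≤ p) (ht : 0 < t) :
    HasDerivAt (hannerB p)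
      ((1 * (p-1) * (1+t)^(p-1-1) - (-1) * (p-1) * (1-t)^(p-1-1)) * t^(1-p)
        + ((1+t)^(p-1) - (1-t)^(p-1)) * ((1-p) * t^(1-p-1))) t := by
  have h1 : HasDerivAt (fun y : ℝ => (1+y)^(p-1)) (1 * (p-1) * (1+t)^(p-1-1)) t :=
    ((hasDerivAt_id t).const_add 1).rpow_const (Or.inl (by positivity))
  have h2 : HasDerivAt (fun y : ℝ => (1-y)^(p-1)) ((-1) * (p-1) * (1-t)^(p-1-1)) t :=
    ((hasDerivAt_id t).const_sub 1).rpow_const (Or.inr (by linarith))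
  have h3 : HasDerivAt (fun y : ℝ => y^(1-p)) ((1-p) * t^(1-p-1)) t :=
    Real.hasDerivAt_rpow_const (Or.inl ht.ne')
  exact (h1.sub h2).mul h3

private lemma hB_deriv_nonpos {p t : ℝ} (hp : 2 ≤ p) (ht : 0 < t) (ht1 : t ≤ 1) :
    deriv (hannerB p) t ≤ 0 := by
  rw [(hB_hasDerivAt hp ht).deriv]
  have e1 : t^(1-p) = t * t^(-p) := by
    rw [show (1-p) = 1 + -p by ring, Real.rpow_add ht, Real.rpow_one]
  have e2 : t^(1-p-1) = t^(-p) := by congr 1; ring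
  have e3 : (1+t)^(p-1) = (1+t)^(p-2) * (1+t) := by
    rw [show p-1 = (p-2)+1 by ring]; exact rpow_succ' (by linarith) (by linarith)
  have e4 : (1-t)^(p-1) = (1-t)^(p-2) * (1-t) := by
    rw [show p-1 = (p-2)+1 by ring]; exact rpow_succ' (by linarith) (by linarith)
  have e5 : (1+t)^(p-1-1) = (1+t)^(p-2) := by congr 1; ring
  have e6 : (1-t)^(p-1-1) = (1-t)^(p-2) := by congr 1; ring
  rw [e1, e2, e3, e4, e5, e6]
  have key : (1 * (p-1) * (1+t)^(p-2) - (-1) * (p-1) * (1-t)^(p-2)) * (t * t^(-p))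
      + ((1+t)^(p-2) * (1+t) - (1-t)^(p-2) * (1-t)) * ((1-p) * t^(-p))
      = (p-1) * t^(-p) * ((1-t)^(p-2) - (1+t)^(p-2)) := by ring
  rw [key]
  have hx : (1-t)^(p-2) ≤ (1+t)^(p-2) :=
    Real.rpow_le_rpow (by linarith) (by linarith) (by linarith)
  have h1 : (0:ℝ) ≤ (p-1) * t^(-p) := mul_nonneg (by linarith) (Real.rpow_nonneg ht.le _)
  exact mul_nonpos_iff.mpr (Or.inl ⟨h1, sub_nonpos.mpr hx⟩)

private lemma hB_anti {p : ℝ} (hp : 2 ≤ p) : AntitoneOn (hannerB p) (Set.Ioc 0 1) := by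
  apply antitoneOn_of_deriv_nonpos (convex_Ioc 0 1)
  · exact fun t ht => (hB_hasDerivAt hp ht.1).continuousAt.continuousWithinAt
  · rw [interior_Ioc]
    exact fun x hx => (hB_hasDerivAt hp hx.1).differentiableAt.differentiableWithinAt
  · rw [interior_Ioc]
    exact fun x hx => hB_deriv_nonpos hp hx.1 hx.2.le


private lemma hAB_self {p r : ℝ} (hp : 2 ≤ p) (hr0 : 0 < r) (hr1 : r ≤ 1) :
    hannerA p r + hannerB p r * r^p = (1+r)^p + (1-r)^p := by
  have h1 : r^(1-p) * r^p = r := by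
    rw [← Real.rpow_add hr0, show 1-p+p = 1 by ring, Real.rpow_one]
  have e1 : (1+r)^p = (1+r)^(p-1) * (1+r) := by
    have h := rpow_succ' (x := 1+r) (q := p-1) (by linarith) (by linarith)
    rwa [show p-1+1 = p by ring] at h
  have e2 : (1-r)^p = (1-r)^(p-1) * (1-r) := by
    have h := rpow_succ' (x := 1-r) (q := p-1) (by linarith) (by linarith)
    rwa [show p-1+1 = p by ring] at h
  rw [hannerA, hannerB, mul_assoc, h1, e1, e2]; ring

private lemma hG_hasDerivAt {p r t : ℝ} (hp : 2 ≤ p) (ht : 0 < t) :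
    HasDerivAt (hannerG p r) (p * t^(p-1) * (hannerB p r - hannerB p t)) t := by
  have h1 : HasDerivAt (fun y : ℝ => y^p) (p * t^(p-1)) t :=
    Real.hasDerivAt_rpow_const (Or.inl ht.ne')
  have h2 : HasDerivAt (fun y : ℝ => (1+y)^p) (1 * p * (1+t)^(p-1)) t :=
    ((hasDerivAt_id t).const_add 1).rpow_const (Or.inl (by positivity))
  have h3 : HasDerivAt (fun y : ℝ => (1-y)^p) ((-1) * p * (1-t)^(p-1)) t :=
    ((hasDerivAt_id t).const_sub 1).rpow_const (Or.inr (by linarith))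
  have h := (((h1.const_mul (hannerB p r)).const_add (hannerA p r)).sub h2).sub h3
  refine h.congr_deriv (Eq.symm ?_)
  have e : t^(p-1) * t^(1-p) = 1 := by
    rw [← Real.rpow_add ht, show p-1+(1-p) = 0 by ring, Real.rpow_zero]
  simp only [hannerB]
  linear_combination (-(p*((1+t)^(p-1) - (1-t)^(p-1)))) * e

private lemma hG_nonneg {p r t : ℝ} (hp : 2 ≤ p) (hr0 : 0 < r) (hr1 : r ≤ 1)
    (ht0 : 0 ≤ t) (ht1 : t ≤ 1) : 0 ≤ hannerG p r t := by
  have hGr : hannerG p r r = 0 := by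
    have := hAB_self hp hr0 hr1
    rw [hannerG]; linarith
  rcases le_total t r with htr | hrt
  · have cont : ContinuousOn (hannerG p r) (Set.Icc 0 r) := by
      have c1 : ContinuousOn (fun t : ℝ => t^p) (Set.Icc 0 r) :=
        continuousOn_id.rpow_const (fun x _ => Or.inr (by linarith))
      have c2 : ContinuousOn (fun t : ℝ => (1+t)^p) (Set.Icc 0 r) :=
        (continuousOn_const.add continuousOn_id).rpow_const (fun x _ => Or.inr (by linarith))
      have c3 : ContinuousOn (fun t : ℝ => (1-t)^p) (Set.Icc 0 r) :=
        (continuousOn_const.sub continuousOn_id).rpow_const (fun x _ => Or.inr (by linarith))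
      exact ((continuousOn_const.add (continuousOn_const.mul c1)).sub c2).sub c3
    have anti : AntitoneOn (hannerG p r) (Set.Icc 0 r) := by
      apply antitoneOn_of_deriv_nonpos (convex_Icc 0 r) cont
      · rw [interior_Icc]
        exact fun x hx => (hG_hasDerivAt hp hx.1).differentiableAt.differentiableWithinAt
      · rw [interior_Icc]
        intro x hx
        rw [(hG_hasDerivAt hp hx.1).deriv]
        have hBle : hannerB p r ≤ hannerB p x :=
          hB_anti hp ⟨hx.1, by linarith [hx.2]⟩ ⟨hr0, hr1⟩ hx.2.le
        have h1 : (0:ℝ) ≤ p * x^(p-1) :=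
          mul_nonneg (by linarith) (Real.rpow_nonneg hx.1.le _)
        exact mul_nonpos_iff.mpr (Or.inl ⟨h1, sub_nonpos.mpr hBle⟩)
    have := anti ⟨ht0, htr⟩ ⟨hr0.le, le_refl r⟩ htr
    rw [hGr] at this; exact this
  · have mono : MonotoneOn (hannerG p r) (Set.Icc r 1) := by
      apply monotoneOn_of_deriv_nonneg (convex_Icc r 1)
      · exact fun x hx => (hG_hasDerivAt hp (lt_of_lt_of_le hr0 hx.1)).continuousAt.continuousWithinAt
      · rw [interior_Icc]
        exact fun x hx =>
          (hG_hasDerivAt hp (lt_of_lt_of_le hr0 hx.1.le)).differentiableAt.differentiableWithinAt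
      · rw [interior_Icc]
        intro x hx
        rw [(hG_hasDerivAt hp (lt_of_lt_of_le hr0 hx.1.le)).deriv]
        have hBle : hannerB p x ≤ hannerB p r :=
          hB_anti hp ⟨hr0, hr1⟩ ⟨lt_of_lt_of_le hr0 hx.1.le, hx.2.le⟩ hx.1.le
        have h1 : (0:ℝ) ≤ p * x^(p-1) :=
          mul_nonneg (by linarith) (Real.rpow_nonneg (by linarith [hx.1]) _)
        exact mul_nonneg h1 (sub_nonneg.mpr hBle)
    have := mono ⟨le_refl r, hr1⟩ ⟨hrt, ht1⟩ hrt
    rw [hGr] at this; exact this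


private lemma scalar_ineq {p r x y : ℝ} (hp : 2 ≤ p) (hr0 : 0 < r) (hr1 : r ≤ 1)
    (hy : 0 ≤ y) (hyx : y ≤ x) :
    (x+y)^p + (x-y)^p ≤ hannerA p r * x^p + hannerB p r * y^p := by
  have hx : 0 ≤ x := le_trans hy hyx
  rcases eq_or_lt_of_le hx with h0 | h0
  · have hy0 : y = 0 := le_antisymm (h0 ▸ hyx) hy
    rw [← h0, hy0]
    simp [Real.zero_rpow (by positivity : p ≠ 0)]
  · set t := y / x with htdef
    have ht0 : 0 ≤ t := div_nonneg hy h0.le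
    have ht1 : t ≤ 1 := div_le_one_of_le₀ hyx h0.le
    have hG := hG_nonneg hp hr0 hr1 ht0 ht1
    rw [hannerG] at hG
    have hxp : (0:ℝ) ≤ x^p := Real.rpow_nonneg hx p
    have key := mul_le_mul_of_nonneg_left (by linarith :
      (1+t)^p + (1-t)^p ≤ hannerA p r + hannerB p r * t^p) hxp
    have e1 : x^p * (1+t)^p = (x+y)^p := by
      rw [← Real.mul_rpow hx (by linarith)]
      congr 1; rw [htdef]; field_simp
    have e2 : x^p * (1-t)^p = (x-y)^p := by
      rw [← Real.mul_rpow hx (by linarith)]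
      congr 1; rw [htdef]; field_simp
    have e3 : x^p * t^p = y^p := by
      rw [← Real.mul_rpow hx ht0]
      congr 1; rw [htdef]; field_simp
    calc (x+y)^p + (x-y)^p = x^p * (1+t)^p + x^p * (1-t)^p := by rw [e1, e2]
      _ = x^p * ((1+t)^p + (1-t)^p) := by ring
      _ ≤ x^p * (hannerA p r + hannerB p r * t^p) := key
      _ = hannerA p r * x^p + hannerB p r * (x^p * t^p) := by ring
      _ = hannerA p r * x^p + hannerB p r * y^p := by rw [e3]

private lemma pointwise_ineq {p r : ℝ} (hp : 2 ≤ p) (hr0 : 0 < r) (hr1 : r ≤ 1) (a b : ℝ) :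
    |a+b|^p + |a-b|^p ≤ hannerA p r * |a|^p + hannerB p r * |b|^p := by
  have habs : |a+b|^p + |a-b|^p = (|a|+|b|)^p + |(|a| - |b|)|^p := by
    rcases le_total 0 a with ha | ha <;> rcases le_total 0 b with hb | hb
    · rw [abs_of_nonneg ha, abs_of_nonneg hb, abs_of_nonneg (add_nonneg ha hb)]
    · rw [abs_of_nonneg ha, abs_of_nonpos hb,
        abs_of_nonneg (by linarith : (0:ℝ) ≤ a - b),
        show a - -b = a + b by ring, show a + -b = a - b by ring]
      exact add_comm _ _
    · rw [abs_of_nonpos ha, abs_of_nonneg hb,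
        abs_of_nonpos (by linarith : a - b ≤ 0),
        show -a - b = -(a+b) by ring, abs_neg, show -a + b = -(a-b) by ring]
      exact add_comm _ _
    · rw [abs_of_nonpos ha, abs_of_nonpos hb, abs_of_nonpos (add_nonpos ha hb),
        show -a - -b = -(a-b) by ring, abs_neg, show -a + -b = -(a+b) by ring]
  rw [habs]
  rcases le_total |b| |a| with h | h
  · rw [abs_of_nonneg (by linarith : (0:ℝ) ≤ |a| - |b|)]
    exact scalar_ineq hp hr0 hr1 (abs_nonneg b) h
  · rw [abs_of_nonpos (by linarith : |a| - |b| ≤ 0), neg_sub]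
    have h1 := scalar_ineq (x := |b|) (y := |a|) hp hr0 hr1 (abs_nonneg a) h
    rw [add_comm |b| |a|] at h1
    have h2 : hannerA p r ≤ hannerB p r := hB_ge_hA hp hr0 hr1
    have h3 : |a|^p ≤ |b|^p := Real.rpow_le_rpow (abs_nonneg a) h (by linarith)
    nlinarith [mul_nonneg (sub_nonneg.mpr h2) (sub_nonneg.mpr h3)]


private lemma LpNorm_rpow {Z : Type*} [MeasurableSpace Z] {μ : Measure Z} {p : ℝ}
    (hp : 0 < p) {h : Z → ℝ} (hh : MemLp h (ENNReal.ofReal p) μ) :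
    LpNorm μ h p ^ p = ∫ a, |h a| ^ p ∂μ := by
  have hP0 : ENNReal.ofReal p ≠ 0 := (ENNReal.ofReal_pos.mpr hp).ne'
  have hPt : ENNReal.ofReal p ≠ ⊤ := ENNReal.ofReal_ne_top
  have htr : (ENNReal.ofReal p).toReal = p := ENNReal.toReal_ofReal hp.le
  have hint : 0 ≤ ∫ a, |h a| ^ p ∂μ :=
    integral_nonneg (fun a => Real.rpow_nonneg (abs_nonneg _) _)
  rw [LpNorm, hh.eLpNorm_eq_integral_rpow_norm hP0 hPt]
  simp only [htr, Real.norm_eq_abs]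
  rw [ENNReal.toReal_ofReal (Real.rpow_nonneg hint _),
    ← Real.rpow_mul hint, inv_mul_cancel₀ hp.ne', Real.rpow_one]

private theorem hanner_aux {Z : Type*} [MeasurableSpace Z] (μ : Measure Z)
    (p : ℝ) (hp : 2 ≤ p) (f g : Z → ℝ)
    (hf : MemLp f (ENNReal.ofReal p) μ) (hg : MemLp g (ENNReal.ofReal p) μ)
    (hgf : LpNorm μ g p ≤ LpNorm μ f p) :
    LpNorm μ (f + g) p ^ p + LpNorm μ (f - g) p ^ p ≤
      (LpNorm μ f p + LpNorm μ g p) ^ p + |LpNorm μ f p - LpNorm μ g p| ^ p := by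
  have hp0 : (0:ℝ) < p := by linarith
  have hP0 : ENNReal.ofReal p ≠ 0 := (ENNReal.ofReal_pos.mpr hp0).ne'
  have hPt : ENNReal.ofReal p ≠ ⊤ := ENNReal.ofReal_ne_top
  have htr : (ENNReal.ofReal p).toReal = p := ENNReal.toReal_ofReal hp0.le
  have hLf0 : 0 ≤ LpNorm μ f p := ENNReal.toReal_nonneg
  have hLg0 : 0 ≤ LpNorm μ g p := ENNReal.toReal_nonneg
  rcases eq_or_lt_of_le hLg0 with hLg | hLg
  · -- ‖g‖ = 0 : g = 0 a.e.
    have hg0 : g =ᵐ[μ] 0 := by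
      refine (eLpNorm_eq_zero_iff hg.1 hP0).mp ?_
      have hfin : eLpNorm g (ENNReal.ofReal p) μ ≠ ⊤ := hg.2.ne
      rcases (ENNReal.toReal_eq_zero_iff _).mp hLg.symm with h | h
      · exact h
      · exact absurd h hfin
    have e1 : LpNorm μ (f + g) p = LpNorm μ f p := by
      rw [LpNorm, LpNorm]
      congr 1
      apply eLpNorm_congr_ae
      filter_upwards [hg0] with x hx
      simp [hx]
    have e2 : LpNorm μ (f - g) p = LpNorm μ f p := by
      rw [LpNorm, LpNorm]
      congr 1
      apply eLpNorm_congr_ae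
      filter_upwards [hg0] with x hx
      simp [hx]
    rw [e1, e2, ← hLg, add_zero, sub_zero, abs_of_nonneg hLf0]
  · -- 0 < ‖g‖ ≤ ‖f‖
    have hLf : 0 < LpNorm μ f p := lt_of_lt_of_le hLg hgf
    set Lf := LpNorm μ f p
    set Lg := LpNorm μ g p
    set r := Lg / Lf with hrdef
    have hr0 : 0 < r := div_pos hLg hLf
    have hr1 : r ≤ 1 := div_le_one_of_le₀ hgf hLf.le
    -- integrability
    have int_f : Integrable (fun a => |f a| ^ p) μ := by
      have := hf.integrable_norm_rpow hP0 hPt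
      simpa [htr, Real.norm_eq_abs] using this
    have int_g : Integrable (fun a => |g a| ^ p) μ := by
      have := hg.integrable_norm_rpow hP0 hPt
      simpa [htr, Real.norm_eq_abs] using this
    have int_add : Integrable (fun a => |f a + g a| ^ p) μ := by
      have := (hf.add hg).integrable_norm_rpow hP0 hPt
      simpa [htr, Real.norm_eq_abs] using this
    have int_sub : Integrable (fun a => |f a - g a| ^ p) μ := by
      have := (hf.sub hg).integrable_norm_rpow hP0 hPt
      simpa [htr, Real.norm_eq_abs] using this
    -- the integral inequality
    have step : ∫ a, (|f a + g a| ^ p + |f a - g a| ^ p) ∂μ ≤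
        ∫ a, (hannerA p r * |f a| ^ p + hannerB p r * |g a| ^ p) ∂μ := by
      refine integral_mono (int_add.add int_sub)
        ((int_f.const_mul _).add (int_g.const_mul _)) ?_
      intro a
      exact pointwise_ineq hp hr0 hr1 (f a) (g a)
    rw [integral_add int_add int_sub, integral_add (int_f.const_mul _) (int_g.const_mul _),
      integral_const_mul, integral_const_mul] at step
    have eLadd : LpNorm μ (f + g) p ^ p = ∫ a, |f a + g a| ^ p ∂μ := by
      rw [LpNorm_rpow hp0 (hf.add hg)]; simp [Pi.add_apply]
    have eLsub : LpNorm μ (f - g) p ^ p = ∫ a, |f a - g a| ^ p ∂μ := by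
      rw [LpNorm_rpow hp0 (hf.sub hg)]; simp [Pi.sub_apply]
    have eLf : Lf ^ p = ∫ a, |f a| ^ p ∂μ := LpNorm_rpow hp0 hf
    have eLg : Lg ^ p = ∫ a, |g a| ^ p ∂μ := LpNorm_rpow hp0 hg
    -- final algebra
    have hLgr : Lg = r * Lf := by rw [hrdef]; field_simp
    have e3 : Lg ^ p = r ^ p * Lf ^ p := by rw [hLgr, Real.mul_rpow hr0.le hLf.le]
    have e4 : (Lf + Lg) ^ p = (1 + r) ^ p * Lf ^ p := by
      rw [show Lf + Lg = (1 + r) * Lf by rw [hLgr]; ring,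
        Real.mul_rpow (by linarith) hLf.le]
    have e5 : (Lf - Lg) ^ p = (1 - r) ^ p * Lf ^ p := by
      rw [show Lf - Lg = (1 - r) * Lf by rw [hLgr]; ring,
        Real.mul_rpow (by linarith) hLf.le]
    have hABs := hAB_self hp hr0 hr1
    have final : hannerA p r * Lf ^ p + hannerB p r * Lg ^ p =
        (Lf + Lg) ^ p + (Lf - Lg) ^ p := by
      rw [e3, e4, e5]
      linear_combination Lf ^ p * hABs
    rw [abs_of_nonneg (by linarith : (0:ℝ) ≤ Lf - Lg), eLadd, eLsub, eLf, eLg] at *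
    linarith [step, final]

/-- Hanner's inequality for `p ≥ 2`:
`‖f+g‖_p^p + ‖f-g‖_p^p ≤ (‖f‖_p + ‖g‖_p)^p + |‖f‖_p - ‖g‖_p|^p`. -/
theorem hanner_inequality_large_p {Z : Type*} [MeasurableSpace Z] (μ : Measure Z)
    (p : ℝ) (hp : 2 ≤ p)
    (f g : Z → ℝ)
    (hf : MemLp f (ENNReal.ofReal p) μ) (hg : MemLp g (ENNReal.ofReal p) μ) :
    LpNorm μ (f + g) p ^ p + LpNorm μ (f - g) p ^ p ≤
      (LpNorm μ f p + LpNorm μ g p) ^ p + |LpNorm μ f p - LpNorm μ g p| ^ p := by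
  rcases le_total (LpNorm μ g p) (LpNorm μ f p) with h | h
  · exact hanner_aux μ p hp f g hf hg h
  · have key := hanner_aux μ p hp g f hg hf h
    have e1 : LpNorm μ (g + f) p = LpNorm μ (f + g) p := by rw [add_comm]
    have e2 : LpNorm μ (g - f) p = LpNorm μ (f - g) p := by
      rw [LpNorm, LpNorm, show g - f = -(f - g) by abel, eLpNorm_neg]
    rw [e1, e2, add_comm (LpNorm μ g p) (LpNorm μ f p), abs_sub_comm] at key
    exact key
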